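/- Let A be a vector space over a field k. For multilinear maps f : A^p → A and g : A^q → A (p, q ≥ 1), define f∘g : A^{p+q−1} → A by (f∘g)(a₁, …, a_{p+q−1}) = Σ_{i=1}^{p} (−1)^{(i−1)(q−1)} f(a₁, …, a_{i−1}, g(a_i, …, a_{i+q−1}), a_{i+q}, …, a_{p+q−1}), and define the Gerstenhaber bracket [f, g] := f∘g − (−1)^{(p−1)(q−1)} g∘f. Then [·,·] satisfies graded antisymmetry [f, g] = −(−1)^{(p−1)(q−1)}[g, f], and the graded Jacobi identity [f, [g, h]] = [[f, g], h] + (−1)^{(p−1)(q−1)}[g, [f, h]] for all multilinear maps f : A^p → A, g : A^q → A, h : A^r → A. That is, the space ⊕_{n≥1} Hom(A^{⊗n}, A), with a p-multilinear map given degree p−1, is a graded Lie algebra under the Gerstenhaber bracket. -/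

import Mathlib

open scoped BigOperators


open Finset

section InsArg
variable {A : Type*} [AddCommGroup A]

/-- Insertion of the value of `g` (an arity-`q` cochain) at slot `i` of the
argument sequence `a`. -/
def insArg (i q : ℕ) (g : (ℕ → A) → A) (a : ℕ → A) : ℕ → A := fun l =>
  if l < i then a l else if l = i then g (fun m => a (i + m)) else a (l + q - 1)

/-- `f` only depends on the first `n` entries of the argument sequence. -/
def GDependsOn {A : Type*} [AddCommGroup A] (n : ℕ) (f : (ℕ → A) → A) : Prop :=
  ∀ a b : ℕ → A, (∀ l < n, a l = b l) → f a = f b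

/-- `f` is additive in each of its first `n` slots. -/
def SlotAdd {A : Type*} [AddCommGroup A] (n : ℕ) (f : (ℕ → A) → A) : Prop :=
  ∀ (a : ℕ → A) (l : ℕ), l < n → ∀ x y : A,
    f (Function.update a l (x + y))
      = f (Function.update a l x) + f (Function.update a l y)

lemma insArg_lt {i q : ℕ} {g : (ℕ → A) → A} {a : ℕ → A} {l : ℕ} (h : l < i) :
    insArg i q g a l = a l := if_pos h

lemma insArg_self {i q : ℕ} {g : (ℕ → A) → A} {a : ℕ → A} :
    insArg i q g a i = g (fun m => a (i + m)) := by
  simp [insArg]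

lemma insArg_gt {i q : ℕ} {g : (ℕ → A) → A} {a : ℕ → A} {l : ℕ} (h : i < l) :
    insArg i q g a l = a (l + q - 1) := by
  show (if l < i then a l else if l = i then g (fun m => a (i + m)) else a (l + q - 1)) = _
  rw [if_neg (by omega), if_neg (by omega)]

lemma insArg_eq_update (i q : ℕ) (g : (ℕ → A) → A) (a : ℕ → A) :
    insArg i q g a
      = Function.update (fun l => if l < i then a l else a (l + q - 1)) i
          (g (fun m => a (i + m))) := by
  funext l
  rcases eq_or_ne l i with rfl | hne
  · rw [Function.update_self]; exact insArg_self
  · rw [Function.update_of_ne hne]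
    rcases lt_or_gt_of_ne hne with h | h
    · rw [insArg_lt h, if_pos h]
    · rw [insArg_gt h, if_neg (by omega)]

/-- Commuting two disjoint insertions (outer insertion at a smaller slot). -/
lemma insArg_swap {q r : ℕ} (hq : 1 ≤ q) (hr : 1 ≤ r) {h : (ℕ → A) → A}
    (hh : GDependsOn r h) (g : (ℕ → A) → A) {i j : ℕ} (hij : j < i) (a : ℕ → A) :
    insArg i q g (insArg j r h a) = insArg j r h (insArg (i + r - 1) q g a) := by
  funext l
  rcases lt_trichotomy l j with h1 | rfl | h1
  · rw [insArg_lt (by omega), insArg_lt h1, insArg_lt h1, insArg_lt (by omega)]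
  · rw [insArg_lt (show l < i by omega), insArg_self, insArg_self]
    exact hh _ _ (fun m hm => (insArg_lt (by omega)).symm)
  · rcases lt_trichotomy l i with h2 | rfl | h2
    · rw [insArg_lt h2, insArg_gt h1, insArg_gt h1, insArg_lt (by omega)]
    · rw [insArg_self, insArg_gt h1, insArg_self]
      congr 1; funext m
      rw [insArg_gt (by omega)]
      congr 1; omega
    · rw [insArg_gt h2, insArg_gt (show j < l + q - 1 by omega),
        insArg_gt h1, insArg_gt (by omega)]
      congr 1; omega

/-- Nesting of insertions: the inner insertion lands inside the `g`-slot. -/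
lemma insArg_nest {q r : ℕ} (hq : 1 ≤ q) (hr : 1 ≤ r) (g h : (ℕ → A) → A) {i j : ℕ}
    (h₁ : i ≤ j) (h₂ : j < i + q) (a : ℕ → A) :
    insArg i q g (insArg j r h a)
      = insArg i (q + r - 1) (fun b => g (insArg (j - i) r h b)) a := by
  funext l
  rcases lt_trichotomy l i with h3 | rfl | h3
  · rw [insArg_lt h3, insArg_lt (by omega), insArg_lt h3]
  · rw [insArg_self, insArg_self]
    congr 1; funext m
    rcases lt_trichotomy m (j - l) with h4 | h4 | h4
    · rw [insArg_lt (show l + m < j by omega), insArg_lt h4]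
    · subst h4
      rw [show l + (j - l) = j from by omega, insArg_self]
      -- RHS
      simp only [insArg_self]
      congr 1; funext m'; congr 1; omega
    · rw [insArg_gt (show j < l + m by omega)]
      simp only [insArg_gt h4]
      congr 1; omega
  · rw [insArg_gt h3, insArg_gt (show j < l + q - 1 by omega), insArg_gt h3]
    congr 1; omega

/-- Commuting two disjoint insertions (outer insertion at a larger slot). -/
lemma insArg_swap' {q r : ℕ} (hq : 1 ≤ q) (hr : 1 ≤ r) (h : (ℕ → A) → A)
    {g : (ℕ → A) → A} (hg : GDependsOn q g) {i j : ℕ} (hij : i + q ≤ j) (a : ℕ → A) :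
    insArg i q g (insArg j r h a) = insArg (j - q + 1) r h (insArg i q g a) := by
  have H := insArg_swap hr hq hg h (show i < j - q + 1 by omega) a
  rw [show j - q + 1 + q - 1 = j from by omega] at H
  exact H.symm

end InsArg

/-- We encode a `p`-multilinear map `A^p → A` as a function `(ℕ → A) → A` depending only
on the first `p` entries of the sequence.  `gcomp p q f g` is the Gerstenhaber circle
product `f ∘ g` of a `p`-cochain `f` and a `q`-cochain `g`:
`(f∘g)(a₁,…,a_{p+q−1}) = Σ_{i=1}^p (−1)^{(i−1)(q−1)}
   f(a₁,…,a_{i−1}, g(a_i,…,a_{i+q−1}), a_{i+q},…,a_{p+q−1})`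
(written with `0`-based indices below). -/
def gcomp {A : Type*} [AddCommGroup A] (p q : ℕ) (f g : (ℕ → A) → A) :
    (ℕ → A) → A := fun a =>
  ∑ i ∈ Finset.range p, ((-1 : ℤ) ^ (i * (q - 1))) •
    f (fun l => if l < i then a l else if l = i then g (fun m => a (i + m))
        else a (l + q - 1))

/-- The Gerstenhaber bracket `[f,g] = f∘g − (−1)^{(p−1)(q−1)} g∘f`. -/
def gbracket {A : Type*} [AddCommGroup A] (p q : ℕ) (f g : (ℕ → A) → A) :
    (ℕ → A) → A := fun a =>
  gcomp p q f g a - ((-1 : ℤ) ^ ((p - 1) * (q - 1))) • gcomp q p g f a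

section Lin
variable {A : Type*} [AddCommGroup A]

lemma gcomp_apply (p q : ℕ) (f g : (ℕ → A) → A) (a : ℕ → A) :
    gcomp p q f g a
      = ∑ i ∈ Finset.range p, ((-1 : ℤ) ^ (i * (q - 1))) • f (insArg i q g a) := rfl

lemma slotAdd_update_zero {n : ℕ} {f : (ℕ → A) → A} (hf : SlotAdd n f)
    (a : ℕ → A) {l : ℕ} (hl : l < n) : f (Function.update a l (0 : A)) = 0 := by
  have h := hf a l hl 0 0
  rw [add_zero] at h
  exact right_eq_add.mp h

lemma slotAdd_update_neg {n : ℕ} {f : (ℕ → A) → A} (hf : SlotAdd n f)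
    (a : ℕ → A) {l : ℕ} (hl : l < n) (x : A) :
    f (Function.update a l (-x)) = - f (Function.update a l x) := by
  have h := hf a l hl x (-x)
  rw [add_neg_cancel, slotAdd_update_zero hf a hl] at h
  exact eq_neg_of_add_eq_zero_right h.symm

lemma slotAdd_update_sum {n : ℕ} {f : (ℕ → A) → A} (hf : SlotAdd n f)
    (a : ℕ → A) {l : ℕ} (hl : l < n) {ι : Type*} (s : Finset ι) (v : ι → A) :
    f (Function.update a l (∑ j ∈ s, v j)) = ∑ j ∈ s, f (Function.update a l (v j)) := by
  classical
  induction s using Finset.induction_on with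
  | empty => simpa using slotAdd_update_zero hf a hl
  | insert x s hx ih =>
      rw [Finset.sum_insert hx, hf a l hl, ih, Finset.sum_insert hx]

lemma slotAdd_update_negpow {n : ℕ} {f : (ℕ → A) → A} (hf : SlotAdd n f)
    (a : ℕ → A) {l : ℕ} (hl : l < n) (e : ℕ) (x : A) :
    f (Function.update a l (((-1 : ℤ) ^ e) • x))
      = ((-1 : ℤ) ^ e) • f (Function.update a l x) := by
  rcases Nat.even_or_odd e with he | he
  · rw [he.neg_one_pow, one_smul, one_smul]
  · rw [he.neg_one_pow, neg_one_zsmul, neg_one_zsmul, slotAdd_update_neg hf a hl]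

/-- Push a (sign-weighted) finite-sum second argument through an insertion slot of `f`. -/
lemma f_insArg_sum {p : ℕ} {f : (ℕ → A) → A} (hf : SlotAdd p f) {i : ℕ} (hi : i < p)
    (n : ℕ) {ι : Type*} (s : Finset ι) (e : ι → ℕ) (G : ι → (ℕ → A) → A) (a : ℕ → A) :
    f (insArg i n (fun b => ∑ j ∈ s, ((-1 : ℤ) ^ (e j)) • G j b) a)
      = ∑ j ∈ s, ((-1 : ℤ) ^ (e j)) • f (insArg i n (G j) a) := by
  rw [insArg_eq_update]
  rw [slotAdd_update_sum hf _ hi]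
  refine Finset.sum_congr rfl fun j hj => ?_
  rw [slotAdd_update_negpow hf _ hi, ← insArg_eq_update]

lemma f_insArg_sub {p : ℕ} {f : (ℕ → A) → A} (hf : SlotAdd p f) {i : ℕ} (hi : i < p)
    (n : ℕ) (G G' : (ℕ → A) → A) (e : ℕ) (a : ℕ → A) :
    f (insArg i n (fun b => G b - ((-1 : ℤ) ^ e) • G' b) a)
      = f (insArg i n G a) - ((-1 : ℤ) ^ e) • f (insArg i n G' a) := by
  rw [insArg_eq_update, insArg_eq_update, insArg_eq_update]
  rw [sub_eq_add_neg, hf _ i hi, slotAdd_update_neg hf _ hi,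
    slotAdd_update_negpow hf _ hi, ← sub_eq_add_neg]

/-- Right linearity of `gcomp` over a bracket-shaped combination. -/
lemma gcomp_sub_negpow_right {p : ℕ} {f : (ℕ → A) → A} (hf : SlotAdd p f)
    (n : ℕ) (G G' : (ℕ → A) → A) (e : ℕ) (a : ℕ → A) :
    gcomp p n f (fun b => G b - ((-1 : ℤ) ^ e) • G' b) a
      = gcomp p n f G a - ((-1 : ℤ) ^ e) • gcomp p n f G' a := by
  rw [gcomp_apply, gcomp_apply, gcomp_apply]
  rw [Finset.smul_sum, ← Finset.sum_sub_distrib]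
  refine Finset.sum_congr rfl fun i hi => ?_
  rw [f_insArg_sub hf (Finset.mem_range.mp hi) n G G' e a, smul_sub,
    smul_smul, smul_smul, mul_comm ((-1 : ℤ) ^ (i * (n - 1)))]

/-- Left linearity of `gcomp` over a bracket-shaped combination. -/
lemma gcomp_sub_negpow_left (p n : ℕ) (F F' h : (ℕ → A) → A) (e : ℕ) (a : ℕ → A) :
    gcomp p n (fun b => F b - ((-1 : ℤ) ^ e) • F' b) h a
      = gcomp p n F h a - ((-1 : ℤ) ^ e) • gcomp p n F' h a := by
  rw [gcomp_apply, gcomp_apply, gcomp_apply]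
  rw [Finset.smul_sum, ← Finset.sum_sub_distrib]
  refine Finset.sum_congr rfl fun i hi => ?_
  simp only [smul_sub, smul_smul, mul_comm]

lemma tri_reindex {M : Type*} [AddCommMonoid M] (n : ℕ) (F : ℕ → ℕ → M) :
    ∑ i ∈ Finset.range (n + 1), ∑ j ∈ Finset.range i, F i j
      = ∑ i ∈ Finset.range (n + 1), ∑ t ∈ Finset.range (n - i), F (i + t + 1) i := by
  rw [Finset.sum_sigma', Finset.sum_sigma']
  refine Finset.sum_nbij' (fun x => ⟨x.2, x.1 - x.2 - 1⟩) (fun x => ⟨x.1 + x.2 + 1, x.1⟩)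
    ?_ ?_ ?_ ?_ ?_
  · rintro ⟨u, v⟩ hm
    simp only [Finset.mem_sigma, Finset.mem_range] at hm ⊢
    omega
  · rintro ⟨u, v⟩ hm
    simp only [Finset.mem_sigma, Finset.mem_range] at hm ⊢
    omega
  · rintro ⟨u, v⟩ hm
    simp only [Finset.mem_sigma, Finset.mem_range] at hm
    show (⟨v + (u - v - 1) + 1, v⟩ : (_ : ℕ) × ℕ) = ⟨u, v⟩
    rw [show v + (u - v - 1) + 1 = u from by omega]
  · rintro ⟨u, v⟩ hm
    simp only [Finset.mem_sigma, Finset.mem_range] at hm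
    show (⟨u, u + v + 1 - u - 1⟩ : (_ : ℕ) × ℕ) = ⟨u, v⟩
    rw [show u + v + 1 - u - 1 = v from by omega]
  · rintro ⟨u, v⟩ hm
    simp only [Finset.mem_sigma, Finset.mem_range] at hm
    show F u v = F (v + (u - v - 1) + 1) v
    rw [show v + (u - v - 1) + 1 = u from by omega]

end Lin

section PreLie
variable {A : Type*} [AddCommGroup A]

/-- Decomposition of `(f∘g)∘h` into the left-disjoint part, the nested part `f∘(g∘h)`,
and the right-disjoint part. -/
lemma negpow_even_add (e k : ℕ) : ((-1:ℤ))^(e + 2*k) = (-1)^e := by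
  rw [pow_add, pow_mul, neg_one_sq, one_pow, mul_one]

lemma gcomp_decomp (P Q R : ℕ) (f g h : (ℕ → A) → A)
    (hf : SlotAdd (P+1) f) (hg : GDependsOn (Q+1) g) (a : ℕ → A) :
    gcomp (P+Q+1) (R+1) (gcomp (P+1) (Q+1) f g) h a
      = (∑ i ∈ Finset.range (P+1), ∑ j ∈ Finset.range i,
           ((-1:ℤ)^(j*R + i*Q)) • f (insArg i (Q+1) g (insArg j (R+1) h a)))
        + gcomp (P+1) (Q+R+1) f (gcomp (Q+1) (R+1) g h) a
        + (∑ i ∈ Finset.range (P+1), ∑ t ∈ Finset.range (P - i),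
           ((-1:ℤ)^((i+(Q+1)+t)*R + i*Q)) •
             f (insArg (i+t+1) (R+1) h (insArg i (Q+1) g a))) := by
  have expand : gcomp (P+1) (Q+R+1) f (gcomp (Q+1) (R+1) g h) a
      = ∑ i ∈ Finset.range (P+1), ∑ j' ∈ Finset.range (Q+1),
          ((-1:ℤ)^(i*(Q+R) + j'*R)) •
            f (insArg i (Q+R+1) (fun b => g (insArg j' (R+1) h b)) a) := by
    rw [gcomp_apply]
    refine Finset.sum_congr rfl fun i hi => ?_
    have e2 : f (insArg i (Q+R+1) (gcomp (Q+1) (R+1) g h) a)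
        = ∑ j' ∈ Finset.range (Q+1), ((-1:ℤ)^(j'*((R+1)-1))) •
            f (insArg i (Q+R+1) (fun b => g (insArg j' (R+1) h b)) a) :=
      f_insArg_sum hf (Finset.mem_range.mp hi) (Q+R+1) (Finset.range (Q+1))
        (fun j' => j'*((R+1)-1)) (fun j' b => g (insArg j' (R+1) h b)) a
    rw [e2, Finset.smul_sum]
    refine Finset.sum_congr rfl fun j' hj' => ?_
    rw [smul_smul, ← pow_add,
      show i*((Q+R+1)-1) + j'*((R+1)-1) = i*(Q+R) + j'*R from by
        simp only [Nat.add_sub_cancel]]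
  have mid : ∀ i ∈ Finset.range (P+1),
      (∑ j ∈ Finset.Ico i (i+(Q+1)),
        ((-1:ℤ)^(j*R + i*Q)) • f (insArg i (Q+1) g (insArg j (R+1) h a)))
        = ∑ j' ∈ Finset.range (Q+1), ((-1:ℤ)^(i*(Q+R) + j'*R)) •
            f (insArg i (Q+R+1) (fun b => g (insArg j' (R+1) h b)) a) := by
    intro i hi
    rw [Finset.sum_Ico_eq_sum_range, show i + (Q+1) - i = Q + 1 from by omega]
    refine Finset.sum_congr rfl fun j' hj' => ?_
    have hj'' : j' < Q + 1 := Finset.mem_range.mp hj'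
    rw [insArg_nest (by omega) (by omega) g h (show i ≤ i + j' by omega)
      (show i + j' < i + (Q+1) by omega)]
    rw [show (Q+1)+(R+1)-1 = Q+R+1 from by omega]
    simp only [Nat.add_sub_cancel_left]
    rw [show (i+j')*R + i*Q = i*(Q+R) + j'*R from by ring]
  have ctrans : ∀ i ∈ Finset.range (P+1),
      (∑ j ∈ Finset.Ico (i+(Q+1)) (P+Q+1),
        ((-1:ℤ)^(j*R + i*Q)) • f (insArg i (Q+1) g (insArg j (R+1) h a)))
        = ∑ t ∈ Finset.range (P - i), ((-1:ℤ)^((i+(Q+1)+t)*R + i*Q)) •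
            f (insArg (i+t+1) (R+1) h (insArg i (Q+1) g a)) := by
    intro i hi
    have hi' : i < P + 1 := Finset.mem_range.mp hi
    rw [Finset.sum_Ico_eq_sum_range, show (P+Q+1) - (i+(Q+1)) = P - i from by omega]
    refine Finset.sum_congr rfl fun t ht => ?_
    rw [insArg_swap' (by omega) (by omega) h hg
      (show i + (Q+1) ≤ i+(Q+1)+t by omega)]
    rw [show i+(Q+1)+t - (Q+1) + 1 = i+t+1 from by omega]
  calc gcomp (P+Q+1) (R+1) (gcomp (P+1) (Q+1) f g) h a
      = ∑ j ∈ Finset.range (P+Q+1), ∑ i ∈ Finset.range (P+1),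
          ((-1:ℤ)^(j*R + i*Q)) • f (insArg i (Q+1) g (insArg j (R+1) h a)) := by
        rw [gcomp_apply]
        refine Finset.sum_congr rfl fun j hj => ?_
        rw [gcomp_apply, Finset.smul_sum]
        refine Finset.sum_congr rfl fun i hi => ?_
        rw [smul_smul, ← pow_add,
          show j*((R+1)-1) + i*((Q+1)-1) = j*R + i*Q from by
            simp only [Nat.add_sub_cancel]]
    _ = ∑ i ∈ Finset.range (P+1), ∑ j ∈ Finset.range (P+Q+1),
          ((-1:ℤ)^(j*R + i*Q)) • f (insArg i (Q+1) g (insArg j (R+1) h a)) :=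
        Finset.sum_comm
    _ = ∑ i ∈ Finset.range (P+1),
          ((∑ j ∈ Finset.range i,
            ((-1:ℤ)^(j*R + i*Q)) • f (insArg i (Q+1) g (insArg j (R+1) h a)))
          + (∑ j ∈ Finset.Ico i (i+(Q+1)),
            ((-1:ℤ)^(j*R + i*Q)) • f (insArg i (Q+1) g (insArg j (R+1) h a)))
          + (∑ j ∈ Finset.Ico (i+(Q+1)) (P+Q+1),
            ((-1:ℤ)^(j*R + i*Q)) • f (insArg i (Q+1) g (insArg j (R+1) h a)))) := by
        refine Finset.sum_congr rfl fun i hi => ?_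
        have hi' : i < P + 1 := Finset.mem_range.mp hi
        rw [Finset.range_eq_Ico,
          ← Finset.sum_Ico_consecutive _ (show (0:ℕ) ≤ i+(Q+1) from by omega)
            (show i+(Q+1) ≤ P+Q+1 from by omega),
          ← Finset.sum_Ico_consecutive _ (show (0:ℕ) ≤ i from by omega)
            (show i ≤ i+(Q+1) from by omega),
          ← Finset.range_eq_Ico]
    _ = (∑ i ∈ Finset.range (P+1), ∑ j ∈ Finset.range i,
          ((-1:ℤ)^(j*R + i*Q)) • f (insArg i (Q+1) g (insArg j (R+1) h a)))
        + (∑ i ∈ Finset.range (P+1), ∑ j ∈ Finset.Ico i (i+(Q+1)),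
          ((-1:ℤ)^(j*R + i*Q)) • f (insArg i (Q+1) g (insArg j (R+1) h a)))
        + (∑ i ∈ Finset.range (P+1), ∑ j ∈ Finset.Ico (i+(Q+1)) (P+Q+1),
          ((-1:ℤ)^(j*R + i*Q)) • f (insArg i (Q+1) g (insArg j (R+1) h a))) := by
        rw [Finset.sum_add_distrib, Finset.sum_add_distrib]
    _ = _ := by
        congr 1
        · congr 1
          exact (Finset.sum_congr rfl mid).trans expand.symm
        · exact Finset.sum_congr rfl ctrans

/-- The graded pre-Lie (right-symmetry) identity for the circle product. -/
lemma preLie (P Q R : ℕ) {f g h : (ℕ → A) → A}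
    (hf : SlotAdd (P+1) f) (hg : GDependsOn (Q+1) g) (hh : GDependsOn (R+1) h)
    (a : ℕ → A) :
    gcomp (P+Q+1) (R+1) (gcomp (P+1) (Q+1) f g) h a
      - gcomp (P+1) (Q+R+1) f (gcomp (Q+1) (R+1) g h) a
    = ((-1:ℤ)^(Q*R)) •
      (gcomp (P+R+1) (Q+1) (gcomp (P+1) (R+1) f h) g a
        - gcomp (P+1) (R+Q+1) f (gcomp (R+1) (Q+1) h g) a) := by
  have d1 := gcomp_decomp P Q R f g h hf hg a
  have d2 := gcomp_decomp P R Q f h g hf hh a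
  have hA : (∑ i ∈ Finset.range (P+1), ∑ j ∈ Finset.range i,
        ((-1:ℤ)^(j*R + i*Q)) • f (insArg i (Q+1) g (insArg j (R+1) h a)))
      = ((-1:ℤ)^(Q*R)) • (∑ i ∈ Finset.range (P+1), ∑ t ∈ Finset.range (P - i),
        ((-1:ℤ)^((i+(R+1)+t)*Q + i*R)) •
          f (insArg (i+t+1) (Q+1) g (insArg i (R+1) h a))) := by
    refine (tri_reindex P fun i j =>
      ((-1:ℤ)^(j*R + i*Q)) • f (insArg i (Q+1) g (insArg j (R+1) h a))).trans ?_
    rw [Finset.smul_sum]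
    refine Finset.sum_congr rfl fun i hi => ?_
    rw [Finset.smul_sum]
    refine Finset.sum_congr rfl fun t ht => ?_
    rw [smul_smul, ← pow_add,
      show Q*R + ((i+(R+1)+t)*Q + i*R) = (i*R + (i+t+1)*Q) + 2*(Q*R) from by ring,
      negpow_even_add]
  have hC : (∑ i ∈ Finset.range (P+1), ∑ t ∈ Finset.range (P - i),
        ((-1:ℤ)^((i+(Q+1)+t)*R + i*Q)) •
          f (insArg (i+t+1) (R+1) h (insArg i (Q+1) g a)))
      = ((-1:ℤ)^(Q*R)) • (∑ i ∈ Finset.range (P+1), ∑ j ∈ Finset.range i,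
        ((-1:ℤ)^(j*Q + i*R)) • f (insArg i (R+1) h (insArg j (Q+1) g a))) := by
    have t1 := tri_reindex P (fun i j =>
      ((-1:ℤ)^(j*Q + i*R)) • f (insArg i (R+1) h (insArg j (Q+1) g a)))
    rw [t1, Finset.smul_sum]
    refine Finset.sum_congr rfl fun i hi => ?_
    rw [Finset.smul_sum]
    refine Finset.sum_congr rfl fun t ht => ?_
    rw [smul_smul, ← pow_add,
      show Q*R + (i*Q + (i+t+1)*R) = (i+(Q+1)+t)*R + i*Q from by ring]
  rw [d1, d2, hA, hC]
  module

end PreLie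

/-- `f : (ℕ → A) → A` encodes a `k`-multilinear map `A^p → A`: it depends only on the
first `p` entries and is additive and `k`-homogeneous in each of them. -/
def IsMultilinearOfArity (k : Type*) {A : Type*} [Field k] [AddCommGroup A] [Module k A]
    (p : ℕ) (f : (ℕ → A) → A) : Prop :=
  (∀ a b : ℕ → A, (∀ l < p, a l = b l) → f a = f b) ∧
  (∀ (a : ℕ → A) (l : ℕ), l < p → ∀ x y : A,
     f (Function.update a l (x + y))
       = f (Function.update a l x) + f (Function.update a l y)) ∧
  (∀ (a : ℕ → A) (l : ℕ), l < p → ∀ (c : k) (x : A),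
     f (Function.update a l (c • x)) = c • f (Function.update a l x))

section Multi
variable {A : Type*} [AddCommGroup A]

lemma insArg_update_lt {q : ℕ} (hq : 1 ≤ q) {l i : ℕ} (hl : l < i)
    (g : (ℕ → A) → A) (a : ℕ → A) (z : A) :
    insArg i q g (Function.update a l z) = Function.update (insArg i q g a) l z := by
  funext t
  rcases eq_or_ne t l with rfl | hne
  · rw [insArg_lt hl, Function.update_self, Function.update_self]
  · rw [Function.update_of_ne hne]
    rcases lt_trichotomy t i with h1 | rfl | h1
    · rw [insArg_lt h1, insArg_lt h1, Function.update_of_ne hne]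
    · rw [insArg_self, insArg_self]
      congr 1; funext m
      rw [Function.update_of_ne (show t + m ≠ l by omega)]
    · rw [insArg_gt h1, insArg_gt h1, Function.update_of_ne (show t + q - 1 ≠ l by omega)]

lemma insArg_update_mid {q : ℕ} (hq : 1 ≤ q) {i l : ℕ} (h₁ : i ≤ l) (h₂ : l < i + q)
    (g : (ℕ → A) → A) (a : ℕ → A) (z : A) :
    insArg i q g (Function.update a l z)
      = Function.update (insArg i q g a) i
          (g (Function.update (fun m => a (i + m)) (l - i) z)) := by
  funext t
  rcases lt_trichotomy t i with h3 | rfl | h3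
  · rw [insArg_lt h3, Function.update_of_ne (show t ≠ l by omega),
      Function.update_of_ne (show t ≠ i by omega), insArg_lt h3]
  · rw [insArg_self, Function.update_self]
    congr 1; funext m
    rcases eq_or_ne m (l - t) with rfl | hm
    · rw [show t + (l - t) = l from by omega, Function.update_self,
        Function.update_self]
    · rw [Function.update_of_ne (show t + m ≠ l by omega), Function.update_of_ne hm]
  · rw [insArg_gt h3, Function.update_of_ne (show t + q - 1 ≠ l by omega),
      Function.update_of_ne (show t ≠ i by omega), insArg_gt h3]

lemma insArg_update_ge {q : ℕ} (hq : 1 ≤ q) {g : (ℕ → A) → A} (hg : GDependsOn q g)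
    {i l : ℕ} (hl : i + q ≤ l) (a : ℕ → A) (z : A) :
    insArg i q g (Function.update a l z)
      = Function.update (insArg i q g a) (l - q + 1) z := by
  funext t
  rcases lt_trichotomy t i with h3 | rfl | h3
  · rw [insArg_lt h3, Function.update_of_ne (show t ≠ l by omega),
      Function.update_of_ne (show t ≠ l - q + 1 by omega), insArg_lt h3]
  · rw [insArg_self, Function.update_of_ne (show t ≠ l - q + 1 by omega), insArg_self]
    exact hg _ _ (fun m hm => by rw [Function.update_of_ne (show t + m ≠ l by omega)])
  · rcases eq_or_ne t (l - q + 1) with heq | hne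
    · subst heq
      rw [insArg_gt h3, show l - q + 1 + q - 1 = l from by omega, Function.update_self,
        Function.update_self]
    · rw [insArg_gt h3, Function.update_of_ne (show t + q - 1 ≠ l by omega),
        Function.update_of_ne hne, insArg_gt h3]

lemma negpow_smul_comm {k : Type*} [Field k] [Module k A] (e : ℕ) (c : k) (x : A) :
    ((-1:ℤ)^e) • (c • x) = c • (((-1:ℤ)^e) • x) := by
  rcases Nat.even_or_odd e with he | he
  · rw [he.neg_one_pow, one_smul, one_smul]
  · rw [he.neg_one_pow, neg_one_zsmul, neg_one_zsmul, smul_neg]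

lemma gcomp_isMultilinear {k : Type*} [Field k] [Module k A] {p q : ℕ}
    (hp : 1 ≤ p) (hq : 1 ≤ q) {f g : (ℕ → A) → A}
    (hf : IsMultilinearOfArity k p f) (hg : IsMultilinearOfArity k q g) :
    IsMultilinearOfArity k (p + q - 1) (gcomp p q f g) := by
  obtain ⟨hfD, hfA, hfS⟩ := hf
  obtain ⟨hgD, hgA, hgS⟩ := hg
  refine ⟨?_, ?_, ?_⟩
  · intro a b hab
    rw [gcomp_apply, gcomp_apply]
    refine Finset.sum_congr rfl fun i hi => ?_
    have hi' : i < p := Finset.mem_range.mp hi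
    congr 1
    apply hfD
    intro l hl
    rcases lt_trichotomy l i with h1 | rfl | h1
    · rw [insArg_lt h1, insArg_lt h1]; exact hab l (by omega)
    · rw [insArg_self, insArg_self]
      exact hgD _ _ fun m hm => hab _ (by omega)
    · rw [insArg_gt h1, insArg_gt h1]; exact hab _ (by omega)
  · intro a l hl x y
    rw [gcomp_apply, gcomp_apply, gcomp_apply, ← Finset.sum_add_distrib]
    refine Finset.sum_congr rfl fun i hi => ?_
    have hi' : i < p := Finset.mem_range.mp hi
    rw [← smul_add]
    congr 1
    rcases lt_or_ge l i with h1 | h1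
    · rw [insArg_update_lt hq h1, insArg_update_lt hq h1, insArg_update_lt hq h1]
      exact hfA _ l (by omega) x y
    · rcases lt_or_ge l (i + q) with h2 | h2
      · rw [insArg_update_mid hq h1 h2, insArg_update_mid hq h1 h2,
          insArg_update_mid hq h1 h2, hgA _ (l - i) (by omega) x y]
        exact hfA _ i hi' _ _
      · rw [insArg_update_ge hq hgD h2, insArg_update_ge hq hgD h2,
          insArg_update_ge hq hgD h2]
        exact hfA _ (l - q + 1) (by omega) x y
  · intro a l hl c x
    rw [gcomp_apply, gcomp_apply, Finset.smul_sum]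
    refine Finset.sum_congr rfl fun i hi => ?_
    have hi' : i < p := Finset.mem_range.mp hi
    have key : f (insArg i q g (Function.update a l (c • x)))
        = c • f (insArg i q g (Function.update a l x)) := by
      rcases lt_or_ge l i with h1 | h1
      · rw [insArg_update_lt hq h1, insArg_update_lt hq h1]
        exact hfS _ l (by omega) c x
      · rcases lt_or_ge l (i + q) with h2 | h2
        · rw [insArg_update_mid hq h1 h2, insArg_update_mid hq h1 h2,
            hgS _ (l - i) (by omega) c x]
          exact hfS _ i hi' c _
        · rw [insArg_update_ge hq hgD h2, insArg_update_ge hq hgD h2]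
          exact hfS _ (l - q + 1) (by omega) c x
    rw [key, negpow_smul_comm]

lemma isMultilinear_sub_negpow {k : Type*} [Field k] [Module k A] {n : ℕ}
    {F F' : (ℕ → A) → A} (h1 : IsMultilinearOfArity k n F)
    (h2 : IsMultilinearOfArity k n F') (e : ℕ) :
    IsMultilinearOfArity k n (fun a => F a - ((-1:ℤ)^e) • F' a) := by
  obtain ⟨d1, a1, s1⟩ := h1
  obtain ⟨d2, a2, s2⟩ := h2
  refine ⟨?_, ?_, ?_⟩
  · intro a b hab
    show F a - ((-1:ℤ)^e) • F' a = F b - ((-1:ℤ)^e) • F' b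
    rw [d1 a b hab, d2 a b hab]
  · intro a l hl x y
    show F (Function.update a l (x + y)) - ((-1:ℤ)^e) • F' (Function.update a l (x + y)) = _
    rw [a1 a l hl x y, a2 a l hl x y, smul_add]
    exact (sub_add_sub_comm _ _ _ _).symm
  · intro a l hl c x
    show F (Function.update a l (c • x)) - ((-1:ℤ)^e) • F' (Function.update a l (c • x)) = _
    rw [s1 a l hl c x, s2 a l hl c x, smul_sub, negpow_smul_comm]

end Multi

/-- For a vector space `A` over a field `k`, the Gerstenhaber bracket
on multilinear maps (a `p`-multilinear map having degree `p−1`) is closed, graded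
antisymmetric, and satisfies the graded Jacobi identity; that is,
`⊕_{n≥1} Hom(A^{⊗n}, A)` is a graded Lie algebra under the Gerstenhaber bracket. -/
theorem gerstenhaber_bracket_graded_lie
    {k A : Type*} [Field k] [AddCommGroup A] [Module k A] :
    -- closure: the bracket of a `p`- and a `q`-cochain is a `(p+q−1)`-cochain
    (∀ (p q : ℕ), 1 ≤ p → 1 ≤ q → ∀ f g : (ℕ → A) → A,
       IsMultilinearOfArity k p f → IsMultilinearOfArity k q g →
       IsMultilinearOfArity k (p + q - 1) (gbracket p q f g)) ∧
    -- graded antisymmetry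
    (∀ (p q : ℕ), 1 ≤ p → 1 ≤ q → ∀ f g : (ℕ → A) → A,
       IsMultilinearOfArity k p f → IsMultilinearOfArity k q g →
       ∀ a : ℕ → A,
         gbracket p q f g a = -(((-1 : ℤ) ^ ((p - 1) * (q - 1))) • gbracket q p g f a)) ∧
    -- graded Jacobi identity
    (∀ (p q r : ℕ), 1 ≤ p → 1 ≤ q → 1 ≤ r → ∀ f g h : (ℕ → A) → A,
       IsMultilinearOfArity k p f → IsMultilinearOfArity k q g →
       IsMultilinearOfArity k r h →
       ∀ a : ℕ → A,
         gbracket p (q + r - 1) f (gbracket q r g h) a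
           = gbracket (p + q - 1) r (gbracket p q f g) h a
             + ((-1 : ℤ) ^ ((p - 1) * (q - 1))) •
                 gbracket q (p + r - 1) g (gbracket p r f h) a) := by
  
  refine ⟨?_, ?_, ?_⟩
  · -- closure
    intro p q hp hq f g hf hg
    have h1 := gcomp_isMultilinear (k := k) hp hq hf hg
    have h2 := gcomp_isMultilinear (k := k) hq hp hg hf
    rw [show q + p - 1 = p + q - 1 from by omega] at h2
    exact isMultilinear_sub_negpow h1 h2 ((p-1)*(q-1))
  · -- graded antisymmetry
    intro p q hp hq f g hf hg a
    simp only [gbracket]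
    rw [show (q-1)*(p-1) = (p-1)*(q-1) from Nat.mul_comm _ _]
    rcases Nat.even_or_odd ((p-1)*(q-1)) with hpar | hpar
    · simp only [hpar.neg_one_pow, one_smul]; abel
    · simp only [hpar.neg_one_pow, neg_one_zsmul]; abel
  · -- graded Jacobi identity
    intro p q r hp hq hr f g h hf hg hh a
    obtain ⟨P, rfl⟩ : ∃ n, p = n + 1 := ⟨p - 1, by omega⟩
    obtain ⟨Q, rfl⟩ : ∃ n, q = n + 1 := ⟨q - 1, by omega⟩
    obtain ⟨R, rfl⟩ : ∃ n, r = n + 1 := ⟨r - 1, by omega⟩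
    simp only [show Q + 1 + (R + 1) - 1 = Q + R + 1 from by omega,
      show P + 1 + (Q + 1) - 1 = P + Q + 1 from by omega,
      show P + 1 + (R + 1) - 1 = P + R + 1 from by omega,
      Nat.add_sub_cancel, gbracket]
    rw [show gbracket (Q+1) (R+1) g h
          = (fun b => gcomp (Q+1) (R+1) g h b - ((-1:ℤ)^(Q*R)) • gcomp (R+1) (Q+1) h g b)
          from rfl,
        show gbracket (P+1) (Q+1) f g
          = (fun b => gcomp (P+1) (Q+1) f g b - ((-1:ℤ)^(P*Q)) • gcomp (Q+1) (P+1) g f b)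
          from rfl,
        show gbracket (P+1) (R+1) f h
          = (fun b => gcomp (P+1) (R+1) f h b - ((-1:ℤ)^(P*R)) • gcomp (R+1) (P+1) h f b)
          from rfl]
    rw [gcomp_sub_negpow_right hf.2.1 (Q+R+1) (gcomp (Q+1) (R+1) g h)
          (gcomp (R+1) (Q+1) h g) (Q*R) a,
        gcomp_sub_negpow_left (Q+R+1) (P+1) (gcomp (Q+1) (R+1) g h)
          (gcomp (R+1) (Q+1) h g) f (Q*R) a,
        gcomp_sub_negpow_left (P+Q+1) (R+1) (gcomp (P+1) (Q+1) f g)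
          (gcomp (Q+1) (P+1) g f) h (P*Q) a,
        gcomp_sub_negpow_right hh.2.1 (P+Q+1) (gcomp (P+1) (Q+1) f g)
          (gcomp (Q+1) (P+1) g f) (P*Q) a,
        gcomp_sub_negpow_right hg.2.1 (P+R+1) (gcomp (P+1) (R+1) f h)
          (gcomp (R+1) (P+1) h f) (P*R) a,
        gcomp_sub_negpow_left (P+R+1) (Q+1) (gcomp (P+1) (R+1) f h)
          (gcomp (R+1) (P+1) h f) g (P*R) a]
    rw [show P*(Q+R) = P*Q + P*R from by ring,
        show (P+Q)*R = P*R + Q*R from by ring,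
        show Q*(P+R) = P*Q + Q*R from by ring]
    simp only [pow_add]
    have h1 := preLie P Q R hf.2.1 hg.1 hh.1 a
    rw [show R+Q+1 = Q+R+1 from by omega] at h1
    have h2 := preLie Q P R hg.2.1 hf.1 hh.1 a
    rw [show Q+P+1 = P+Q+1 from by omega, show R+P+1 = P+R+1 from by omega] at h2
    have h3 := preLie R P Q hh.2.1 hf.1 hg.1 a
    rw [show R+P+1 = P+R+1 from by omega, show R+Q+1 = Q+R+1 from by omega,
        show Q+P+1 = P+Q+1 from by omega] at h3
    rcases Nat.even_or_odd (P*Q) with e1 | e1 <;>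
      rcases Nat.even_or_odd (P*R) with e2 | e2 <;>
      rcases Nat.even_or_odd (Q*R) with e3 | e3 <;>
      simp only [e1.neg_one_pow, e2.neg_one_pow, e3.neg_one_pow, one_smul, one_mul,
        mul_one, neg_mul, mul_neg, neg_neg, neg_one_zsmul, neg_smul, smul_neg]
        at h1 h2 h3 ⊢ <;>
      rw [sub_eq_iff_eq_add.mp h1, sub_eq_iff_eq_add.mp h2, sub_eq_iff_eq_add.mp h3] <;>
      abel
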